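/- Let E be a finite-dimensional real inner product space and T : E → E an iso-averaged linear map. If x ∈ E does not belong to the subspace Fix T + ker T (the sum of the fixed-point subspace Fix T := {y : T y = y} and the kernel of T), then ‖T^{k+1} x‖ < ‖T^k x‖ for all k ∈ ℕ. -/
import Mathlib

open RealInnerProductSpace

/-- The fixed-point subspace `Fix T = {y : T y = y}` of a linear endomorphism. -/
noncomputable def fixedSubspace {E : Type*} [NormedAddCommGroup E]
    [InnerProductSpace ℝ E] (T : E →ₗ[ℝ] E) : Submodule ℝ E :=
  LinearMap.eqLocus T LinearMap.id

/-- If `T` is iso-averaged and `x ∉ Fix T + ker T`, then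
`‖T^{k+1} x‖ < ‖T^k x‖` for all `k`. -/
theorem norm_pow_strict_anti_of_not_mem_fix_sup_ker {E : Type*} [NormedAddCommGroup E]
    [InnerProductSpace ℝ E] [FiniteDimensional ℝ E] (T : E →ₗ[ℝ] E)
    (hiso : (2 : ℝ) • (LinearMap.adjoint T ∘ₗ T) = T + LinearMap.adjoint T)
    (x : E) (hx : x ∉ fixedSubspace T ⊔ LinearMap.ker T) :
    ∀ k : ℕ, ‖(T ^ (k + 1)) x‖ < ‖(T ^ k) x‖ := by
  -- key identity: ⟪T y, y⟫ = ‖T y‖²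
  have hA : ∀ y : E, ⟪T y, y⟫ = ‖T y‖ ^ 2 := by
    intro y
    have h := congrArg (fun S : E →ₗ[ℝ] E => ⟪S y, y⟫) hiso
    simp only [LinearMap.smul_apply, LinearMap.add_apply, LinearMap.comp_apply,
      inner_smul_left, LinearMap.adjoint_inner_left, inner_add_left,
      RCLike.conj_to_real] at h
    rw [real_inner_self_eq_norm_sq] at h
    linarith [real_inner_comm (T y) y]
  -- hence ‖T y - y‖² = ‖y‖² - ‖T y‖²
  have hB : ∀ y : E, ‖T y - y‖ ^ 2 = ‖y‖ ^ 2 - ‖T y‖ ^ 2 := by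
    intro y
    rw [norm_sub_sq_real, hA y]; ring
  -- ker T ⊆ ker T*
  have hker : ∀ y : E, T y = 0 → LinearMap.adjoint T y = 0 := by
    intro y hy
    have h := congrArg (fun S : E →ₗ[ℝ] E => S y) hiso
    simp only [LinearMap.smul_apply, LinearMap.add_apply, LinearMap.comp_apply, hy,
      map_zero, smul_zero, zero_add] at h
    exact h.symm
  -- T (T y) = 0 → T y = 0
  have hC : ∀ y : E, T (T y) = 0 → T y = 0 := by
    intro y hy
    have h1 : LinearMap.adjoint T (T y) = 0 := hker _ hy
    have h2 : ⟪T y, T y⟫ = 0 := by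
      have h3 := LinearMap.adjoint_inner_left T y (T y)
      rw [h1, inner_zero_left] at h3
      exact h3.symm
    exact inner_self_eq_zero.mp h2
  -- ker (T^k) ≤ ker T for all k
  have hKpow : ∀ k : ℕ, ∀ y : E, (T ^ k) y = 0 → T y = 0 := by
    intro k
    induction k with
    | zero => intro y hy; simp [pow_zero] at hy; simp [hy]
    | succ n ih =>
      intro y hy
      rw [pow_succ] at hy
      have : T (T y) = 0 := ih (T y) (by simpa [Module.End.mul_apply] using hy)
      exact hC y this
  intro k
  set y := (T ^ k) x with hy
  have hsucc : (T ^ (k + 1)) x = T y := by rw [pow_succ']; rfl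
  rw [hsucc]
  have hne : T y ≠ y := by
    intro heq
    apply hx
    have hfix : y ∈ fixedSubspace T := by
      rw [fixedSubspace, LinearMap.mem_eqLocus]; exact heq
    have hfy : ∀ n : ℕ, (T ^ n) y = y := by
      intro n
      induction n with
      | zero => simp
      | succ m ihm => rw [pow_succ', Module.End.mul_apply, ihm, heq]
    have hz : T (x - y) = 0 := by
      apply hKpow k
      rw [map_sub, hfy k, ← hy, sub_self]
    have : x = y + (x - y) := by abel
    rw [this]
    exact Submodule.add_mem_sup hfix hz
  have hne' : T y - y ≠ 0 := sub_ne_zero.mpr hne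
  have hpos : 0 < ‖T y - y‖ ^ 2 := pow_pos (norm_pos_iff.mpr hne') 2
  nlinarith [hB y, norm_nonneg (T y), norm_nonneg y]
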